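/- Let $f : \mathbb{R}^d \to \mathbb{R}^d$ satisfy the one-sided Lipschitz condition $\langle f(x) - f(y), x - y \rangle \le \lambda \|x-y\|^2$ for all $x, y$, with $\lambda \le 0$. Let weights $\{\omega_j\}$ satisfy $\omega_0 > 0$, $\omega_j \le 0$ for $j \ge 1$, and $\sum_{j=0}^n \omega_j \ge 0$ for all $n \ge 1$. If $(x_n)$ and $(y_n)$ are two sequences satisfying $\sum_{j=0}^{n} \omega_{n-j} x_j = h^{\alpha} f(x_n)$ and $\sum_{j=0}^{n} \omega_{n-j} y_j = h^{\alpha} f(y_n)$ for all $n \ge 1$ with $h > 0$, then setting $z_n = x_n - y_n$, the inequality $(\omega_0 - 2\lambda h^{\alpha})\|z_n\|^2 \le \sum_{j=0}^{n-1} |\omega_{n-j}| \, \|z_j\|^2$ holds for all $n \ge 1$. -/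

import Mathlib

theorem fbdf_contractivity_recursion {d : ℕ}
    (f : EuclideanSpace ℝ (Fin d) → EuclideanSpace ℝ (Fin d)) (lam : ℝ) (hlam : lam ≤ 0)
    (hf : ∀ x y, (inner ℝ (f x - f y) (x - y) : ℝ) ≤ lam * ‖x - y‖ ^ 2)
    (ω : ℕ → ℝ) (hω0 : 0 < ω 0) (hωneg : ∀ j, 1 ≤ j → ω j ≤ 0)
    (hsum : ∀ n : ℕ, 1 ≤ n → 0 ≤ ∑ j ∈ Finset.range (n + 1), ω j)
    (h α : ℝ) (hh : 0 < h)
    (x y : ℕ → EuclideanSpace ℝ (Fin d))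
    (hx : ∀ n : ℕ, 1 ≤ n → ∑ j ∈ Finset.range (n + 1), ω (n - j) • x j = h ^ α • f (x n))
    (hy : ∀ n : ℕ, 1 ≤ n → ∑ j ∈ Finset.range (n + 1), ω (n - j) • y j = h ^ α • f (y n)) :
    ∀ n : ℕ, 1 ≤ n →
      (ω 0 - 2 * lam * h ^ α) * ‖x n - y n‖ ^ 2
        ≤ ∑ j ∈ Finset.range n, |ω (n - j)| * ‖x j - y j‖ ^ 2 := by
  intro n hn
  set z : ℕ → EuclideanSpace ℝ (Fin d) := fun j => x j - y j with hz
  have hP : 0 < h ^ α := Real.rpow_pos_of_pos hh α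
  have key : ∑ j ∈ Finset.range (n + 1), ω (n - j) • z j
      = h ^ α • (f (x n) - f (y n)) := by
    simp only [hz, smul_sub, Finset.sum_sub_distrib, hx n hn, hy n hn]
  have hinner : ∑ j ∈ Finset.range (n + 1), ω (n - j) * (inner ℝ (z n) (z j) : ℝ)
      = h ^ α * (inner ℝ (f (x n) - f (y n)) (z n) : ℝ) := by
    have h1 := congrArg (fun v => (inner ℝ (z n) v : ℝ)) key
    simp only [inner_sum, real_inner_smul_right] at h1
    rw [h1, real_inner_comm]
  have hsplit : ∑ j ∈ Finset.range (n + 1), ω (n - j) * (inner ℝ (z n) (z j) : ℝ)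
      = (∑ j ∈ Finset.range n, ω (n - j) * (inner ℝ (z n) (z j) : ℝ))
        + ω 0 * ‖z n‖ ^ 2 := by
    rw [Finset.sum_range_succ]
    congr 1
    rw [Nat.sub_self, real_inner_self_eq_norm_sq]
  have hrhs : h ^ α * (inner ℝ (f (x n) - f (y n)) (z n) : ℝ)
      ≤ h ^ α * (lam * ‖z n‖ ^ 2) := by
    apply mul_le_mul_of_nonneg_left _ hP.le
    exact hf (x n) (y n)
  -- termwise bound on the history sum
  have hterm : ∀ j ∈ Finset.range n,
      -(ω (n - j) * (inner ℝ (z n) (z j) : ℝ))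
        ≤ |ω (n - j)| * (‖z n‖ ^ 2 + ‖z j‖ ^ 2) / 2 := by
    intro j hj
    have hj' : 1 ≤ n - j := by have := Finset.mem_range.mp hj; omega
    have hωle : ω (n - j) ≤ 0 := hωneg _ hj'
    have habs : |ω (n - j)| = -ω (n - j) := abs_of_nonpos hωle
    have h1 : (inner ℝ (z n) (z j) : ℝ) ≤ ‖z n‖ * ‖z j‖ := real_inner_le_norm _ _
    have h2 : ‖z n‖ * ‖z j‖ ≤ (‖z n‖ ^ 2 + ‖z j‖ ^ 2) / 2 := by nlinarith [sq_nonneg (‖z n‖ - ‖z j‖)]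
    rw [habs]
    nlinarith [h1, h2, neg_nonneg.mpr hωle]
  have hS : -(∑ j ∈ Finset.range n, ω (n - j) * (inner ℝ (z n) (z j) : ℝ))
      ≤ ∑ j ∈ Finset.range n, |ω (n - j)| * (‖z n‖ ^ 2 + ‖z j‖ ^ 2) / 2 := by
    rw [← Finset.sum_neg_distrib]
    exact Finset.sum_le_sum hterm
  -- total weight bound
  have hre : ∑ j ∈ Finset.range n, |ω (n - j)| = ∑ j ∈ Finset.range n, |ω (j + 1)| := by
    rw [← Finset.sum_range_reflect (fun j => |ω (j + 1)|) n]
    apply Finset.sum_congr rfl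
    intro j hj
    have hjn := Finset.mem_range.mp hj
    have : n - 1 - j + 1 = n - j := by omega
    rw [this]
  have hW : ∑ j ∈ Finset.range n, |ω (n - j)| ≤ ω 0 := by
    rw [hre]
    have habs : ∀ j ∈ Finset.range n, |ω (j + 1)| = -ω (j + 1) := fun j _ =>
      abs_of_nonpos (hωneg _ (Nat.le_add_left 1 j))
    rw [Finset.sum_congr rfl habs, Finset.sum_neg_distrib]
    have := hsum n hn
    rw [Finset.sum_range_succ'] at this
    linarith
  -- combine
  have hexpand : ∑ j ∈ Finset.range n, |ω (n - j)| * (‖z n‖ ^ 2 + ‖z j‖ ^ 2) / 2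
      = (∑ j ∈ Finset.range n, |ω (n - j)|) * ‖z n‖ ^ 2 / 2
        + (∑ j ∈ Finset.range n, |ω (n - j)| * ‖z j‖ ^ 2) / 2 := by
    rw [Finset.sum_mul, ← Finset.sum_div, ← add_div, ← Finset.sum_add_distrib]
    congr 1
    apply Finset.sum_congr rfl
    intro j _
    ring
  have hNnn : (0:ℝ) ≤ ‖z n‖ ^ 2 := sq_nonneg _
  have hWN : (∑ j ∈ Finset.range n, |ω (n - j)|) * ‖z n‖ ^ 2 ≤ ω 0 * ‖z n‖ ^ 2 :=
    mul_le_mul_of_nonneg_right hW hNnn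
  have hmain : ω 0 * ‖z n‖ ^ 2
      ≤ h ^ α * (lam * ‖z n‖ ^ 2)
        - ∑ j ∈ Finset.range n, ω (n - j) * (inner ℝ (z n) (z j) : ℝ) := by
    have := hinner
    rw [hsplit] at this
    linarith [hrhs]
  have : ω 0 * ‖z n‖ ^ 2
      ≤ h ^ α * (lam * ‖z n‖ ^ 2) + ω 0 * ‖z n‖ ^ 2 / 2
        + (∑ j ∈ Finset.range n, |ω (n - j)| * ‖z j‖ ^ 2) / 2 := by
    calc ω 0 * ‖z n‖ ^ 2 ≤ _ := hmain
    _ ≤ h ^ α * (lam * ‖z n‖ ^ 2)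
        + ∑ j ∈ Finset.range n, |ω (n - j)| * (‖z n‖ ^ 2 + ‖z j‖ ^ 2) / 2 := by linarith [hS]
    _ ≤ _ := by rw [hexpand]; linarith [hWN]
  have hfin : (ω 0 - 2 * lam * h ^ α) * ‖z n‖ ^ 2
      ≤ ∑ j ∈ Finset.range n, |ω (n - j)| * ‖z j‖ ^ 2 := by nlinarith [this]
  simpa [hz] using hfin
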